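/- For odd N ≥ 3 and every n ≥ 1, the odd-degree Euler polynomial E_{2n−1} satisfies N^{2n−1}·[E_{2n−1}(y/N) + E_{2n−1}((2−y)/N) + E_{2n−1}((2+y)/N) + ... + E_{2n−1}((y + N − 1)/N)] = E_{2n−1}(y) for all y ∈ [0,1], so E_{2n−1} is a second, independent eigenfunction of the multi-tent map's Perron–Frobenius operator with the same eigenvalue N^{−2n}. -/

import Mathlib

open Polynomial Finset


/-- The `m`-th Euler polynomial (as a real function), via the classical identity
`E_m(x) = 2^{m+1}/(m+1) · (B_{m+1}((x+1)/2) - B_{m+1}(x/2))` with `B` the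
Bernoulli polynomials (generating function `2 e^{xt}/(e^t+1)`). -/
noncomputable def eulerPoly (m : ℕ) (x : ℝ) : ℝ :=
  2 ^ (m + 1) / (m + 1) *
    ((Polynomial.aeval ((x + 1) / 2) (Polynomial.bernoulli (m + 1)) : ℝ) -
      (Polynomial.aeval (x / 2) (Polynomial.bernoulli (m + 1)) : ℝ))


noncomputable def EP (m : ℕ) : Polynomial ℚ :=
  Polynomial.C (2 ^ (m + 1) / (m + 1) : ℚ) *
    ((Polynomial.bernoulli (m + 1)).comp (Polynomial.C (1/2 : ℚ) * (Polynomial.X + 1)) -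
      (Polynomial.bernoulli (m + 1)).comp (Polynomial.C (1/2 : ℚ) * Polynomial.X))

lemma eulerPoly_eq_aeval (m : ℕ) (x : ℝ) : eulerPoly m x = Polynomial.aeval x (EP m) := by
  simp only [EP, map_mul, map_sub, Polynomial.aeval_comp, map_add, Polynomial.aeval_X,
    Polynomial.aeval_one, Polynomial.aeval_C, eulerPoly]
  push_cast
  norm_num
  rw [show ((1:ℝ)/2 * (x+1)) = (x+1)/2 by ring, show ((1:ℝ)/2 * x) = x/2 by ring]
  exact Or.inl rfl

lemma EP_eval_add_one (m : ℕ) (x : ℚ) :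
    (EP m).eval (x + 1) + (EP m).eval x = 2 * x ^ m := by
  have h := Polynomial.bernoulli_eval_one_add (m + 1) (x / 2)
  have hm : ((m : ℚ) + 1) ≠ 0 := by positivity
  simp only [EP, eval_mul, eval_sub, Polynomial.eval_comp, eval_add, eval_X, eval_one, eval_C]
  have e1 : (1/2 : ℚ) * (x + 1 + 1) = 1 + x / 2 := by ring
  have e2 : (1/2 : ℚ) * (x + 1) = (x+1)/2 := by ring
  have e3 : (1/2 : ℚ) * x = x / 2 := by ring
  rw [e1, e2, e3, h]
  simp only [Nat.add_sub_cancel]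
  field_simp
  have h2 : (1/2:ℚ)^m * 2^m = 1 := by rw [← mul_pow]; norm_num
  push_cast
  linear_combination (x^m*(1+(m:ℚ))*2) * h2

lemma alt_periodic_zero {d : Polynomial ℚ} {c : ℚ} (hc : c ≠ 0)
    (h : ∀ x : ℚ, d.eval (x + c) = - d.eval x) : d = 0 := by
  have hk : ∀ k : ℕ, d.eval ((2 * k) * c) = d.eval 0 := by
    intro k
    induction k with
    | zero => norm_num
    | succ k ih =>
      have e : (2 * ((k:ℚ)+1)) * c = 2 * (k:ℚ) * c + c + c := by ring
      push_cast
      rw [e, h, h, neg_neg]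
      push_cast at ih
      exact ih
  have hconst : d = Polynomial.C (d.eval 0) := by
    by_contra hne
    have hsub : d - Polynomial.C (d.eval 0) ≠ 0 := sub_ne_zero.mpr hne
    have hinf : {x : ℚ | (d - Polynomial.C (d.eval 0)).IsRoot x}.Infinite := by
      apply Set.infinite_of_injective_forall_mem (f := fun k : ℕ => ((2 * k : ℕ) : ℚ) * c)
      · intro a b hab
        simp only [mul_eq_mul_right_iff, Nat.cast_inj, hc, or_false] at hab
        omega
      · intro k
        simp [Polynomial.IsRoot, hk k]
    exact hinf ((Polynomial.finite_setOf_isRoot hsub))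
  have h0 : d.eval 0 = 0 := by
    have := h 0
    rw [hconst] at this
    simp at this
    linarith [this]
  rw [hconst, h0, map_zero]

lemma EP_reflect (m : ℕ) (hm : Odd m) :
    EP m + (EP m).comp (Polynomial.C 1 - Polynomial.X) = 0 := by
  apply alt_periodic_zero (c := (1:ℚ)) one_ne_zero
  intro x
  simp only [eval_add, Polynomial.eval_comp, eval_sub, eval_C, eval_X]
  have h1 := EP_eval_add_one m x
  have h2 := EP_eval_add_one m (-x)
  have h3 : (-x : ℚ) ^ m = -(x ^ m) := hm.neg_pow x
  have e1 : (1 - (x + 1) : ℚ) = -x := by ring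
  have e2 : (-x + 1 : ℚ) = 1 - x := by ring
  rw [e1]
  rw [e2] at h2
  linarith

lemma EP_mult (m N : ℕ) (hNodd : Odd N) (hN0 : 0 < N) :
    Polynomial.C ((N:ℚ)^m) *
        ∑ k ∈ Finset.range N,
          Polynomial.C ((-1:ℚ)^k) * (EP m).comp (Polynomial.X + Polynomial.C ((k:ℚ) / N)) -
      (EP m).comp (Polynomial.C (N:ℚ) * Polynomial.X) = 0 := by
  have hNz : ((N:ℚ)) ≠ 0 := Nat.cast_ne_zero.mpr hN0.ne'
  apply alt_periodic_zero (c := 1 / (N:ℚ)) (by positivity)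
  intro x
  simp only [eval_sub, eval_mul, eval_C, eval_finset_sum, Polynomial.eval_comp, eval_add, eval_X]
  set E : ℚ → ℚ := fun t => (EP m).eval t with hE
  set g : ℕ → ℚ := fun k => (-1:ℚ)^k * E (x + k / N) with hg
  have hshift : ∑ k ∈ Finset.range N, (-1:ℚ)^k * E (x + 1/N + k / N)
      = -(∑ k ∈ Finset.range N, g k) + 2 * x ^ m := by
    have hterm : ∀ k ∈ Finset.range N, (-1:ℚ)^k * E (x + 1/N + k / N) = -(g (k+1)) := by
      intro k _
      have e : x + 1/N + (k:ℚ)/N = x + ((k:ℚ)+1)/N := by ring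
      simp only [hg, pow_succ, e]
      push_cast
      ring
    rw [Finset.sum_congr rfl hterm, Finset.sum_neg_distrib]
    have hs : ∑ k ∈ Finset.range N, g (k+1) = (∑ k ∈ Finset.range N, g k) + g N - g 0 := by
      have := Finset.sum_range_succ' g N
      have h2 := Finset.sum_range_succ g N
      rw [h2] at this
      linarith [this]
    have hgN : g N = -(E (x + 1)) := by
      simp only [hg, hNodd.neg_one_pow, div_self hNz]
      ring
    have hg0 : g 0 = E x := by simp [hg]
    have hfe : E (x + 1) + E x = 2 * x ^ m := EP_eval_add_one m x
    rw [hs, hgN, hg0]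
    linarith
  rw [hshift]
  have e2 : (N:ℚ) * (x + 1/N) = N * x + 1 := by field_simp
  rw [e2]
  have hfe2 : E (N * x + 1) + E (N * x) = 2 * ((N:ℚ) * x) ^ m := EP_eval_add_one m ((N:ℚ) * x)
  have : ((N:ℚ) * x) ^ m = (N:ℚ)^m * x ^ m := mul_pow _ _ _
  rw [this] at hfe2
  simp only [hE] at *
  linarith [mul_comm ((N:ℚ)^m) (∑ k ∈ Finset.range N, g k)]

lemma euler_reflect_real (m : ℕ) (hm : Odd m) (x : ℝ) :
    eulerPoly m (1 - x) = - eulerPoly m x := by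
  have h := congrArg (Polynomial.aeval (x : ℝ)) (EP_reflect m hm)
  simp only [map_add, Polynomial.aeval_comp, map_sub, Polynomial.aeval_C, Polynomial.aeval_X,
    map_one, map_zero] at h
  rw [eulerPoly_eq_aeval, eulerPoly_eq_aeval]
  linarith

lemma euler_mult_real (m N : ℕ) (hNodd : Odd N) (hN0 : 0 < N) (x : ℝ) :
    (N:ℝ)^m * ∑ k ∈ Finset.range N, (-1:ℝ)^k * eulerPoly m (x + k/N) = eulerPoly m (N*x) := by
  have h := congrArg (Polynomial.aeval (x : ℝ)) (EP_mult m N hNodd hN0)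
  simp only [map_sub, map_mul, map_sum, Polynomial.aeval_C, Polynomial.aeval_comp, map_add,
    Polynomial.aeval_X, map_zero] at h
  push_cast at h
  rw [sub_eq_zero] at h
  simp only [eulerPoly_eq_aeval]
  exact h

lemma sum_odd_pairs (g : ℕ → ℝ) (t : ℕ) :
    ∑ k ∈ Finset.range (2*t+1), g k = g 0 + ∑ j ∈ Finset.range t, (g (2*j+1) + g (2*j+2)) := by
  induction t with
  | zero => simp
  | succ t ih =>
    rw [show 2*(t+1)+1 = (2*t+1)+1+1 by ring, Finset.sum_range_succ, Finset.sum_range_succ, ih,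
      Finset.sum_range_succ, show 2*t+1+1 = 2*t+2 by omega]
    ring

/-- For odd `N ≥ 3` and `n ≥ 1`, the odd-degree Euler polynomial `E_{2n-1}` is a
second, independent eigenfunction of the Perron–Frobenius operator of the
multi-tent map of slope `±N`, with the same eigenvalue `N^{-2n}`: summing over
the `N` preimages `y/N, (2-y)/N, (2+y)/N, ..., ((N-1)+y)/N` gives
`N^{2n-1} · Σ = E_{2n-1}(y)`. -/
theorem euler_eigenfunction_odd (N : ℕ) (hN : 3 ≤ N) (hNodd : Odd N)
    (n : ℕ) (hn : 1 ≤ n) (y : ℝ) (hy : y ∈ Set.Icc (0 : ℝ) 1) :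
    (N : ℝ) ^ (2 * (n : ℤ) - 1) *
        (eulerPoly (2 * n - 1) (y / N) +
          ∑ j ∈ Finset.range ((N - 1) / 2),
            (eulerPoly (2 * n - 1) (((2 * (j : ℝ) + 2) - y) / N) +
              eulerPoly (2 * n - 1) (((2 * (j : ℝ) + 2) + y) / N))) =
      eulerPoly (2 * n - 1) y := by
  set m := 2 * n - 1 with hm
  have hmodd : Odd m := ⟨n - 1, by omega⟩
  have hN0 : 0 < N := by omega
  have hNR : (N : ℝ) ≠ 0 := Nat.cast_ne_zero.mpr hN0.ne'
  obtain ⟨t, ht⟩ := hNodd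
  have hht : (N - 1) / 2 = t := by omega
  -- rewrite the zpow
  have hz : (N : ℝ) ^ (2 * (n : ℤ) - 1) = (N : ℝ) ^ m := by
    rw [show (2 * (n : ℤ) - 1) = (m : ℤ) by omega, zpow_natCast]
  rw [hz, hht]
  -- multiplication theorem at x = y / N
  have hmul := euler_mult_real m N ⟨t, ht⟩ hN0 (y / N)
  rw [mul_div_cancel₀ y hNR] at hmul
  rw [← hmul]
  congr 1
  -- now show the bracket equals the alternating sum
  have hsplit := sum_odd_pairs (fun k => (-1:ℝ)^k * eulerPoly m (y/N + k/N)) t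
  rw [show 2*t+1 = N by omega] at hsplit
  rw [hsplit]
  congr 1
  · simp
  -- pairwise terms
  have hstep : ∀ j ∈ Finset.range t,
      ((-1:ℝ)^(2*j+1) * eulerPoly m (y/N + (2*j+1 : ℕ)/N) +
        (-1:ℝ)^(2*j+2) * eulerPoly m (y/N + (2*j+2 : ℕ)/N))
      = eulerPoly m ((2*((t-1-j : ℕ):ℝ)+2 - y)/N) + eulerPoly m ((2*(j:ℝ)+2 + y)/N) := by
    intro j hj
    have hjt : j < t := Finset.mem_range.mp hj
    have hs1 : (-1:ℝ)^(2*j+1) = -1 := by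
      rw [pow_succ, pow_mul]; norm_num
    have hs2 : (-1:ℝ)^(2*j+2) = 1 := by
      rw [pow_add, pow_mul]; norm_num
    have hrefl : -eulerPoly m (y/N + (2*j+1 : ℕ)/N) = eulerPoly m ((2*((t-1-j : ℕ):ℝ)+2 - y)/N) := by
      rw [← euler_reflect_real m hmodd]
      congr 1
      have hc : ((t-1-j : ℕ):ℝ) = (t:ℝ) - 1 - (j:ℝ) := by
        have e : t - 1 - j = t - (1 + j) := by omega
        rw [e, Nat.cast_sub (by omega : 1 + j ≤ t)]
        push_cast
        ring
      rw [hc]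
      have hNr : (N:ℝ) = 2*(t:ℝ)+1 := by rw [ht]; push_cast; ring
      field_simp
      rw [hNr]
      push_cast
      ring
    rw [hs1, hs2]
    have h2 : eulerPoly m (y/N + ((2*j+2 : ℕ):ℝ)/N) = eulerPoly m ((2*(j:ℝ)+2 + y)/N) := by
      congr 1
      push_cast
      field_simp
      ring
    rw [h2, ← hrefl]
    ring
  rw [Finset.sum_congr rfl hstep, Finset.sum_add_distrib, Finset.sum_add_distrib,
    Finset.sum_range_reflect (fun i : ℕ => eulerPoly m ((2*(i:ℝ)+2 - y)/N)) t]
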